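/- Let p₀, p₁, p₂ ≥ 0 with p₀ + p₁ + p₂ = 1 and p₁ > 0, and let τ > 0. Define a(v) := 2v² arccos(1/(2v)) − (1/2)√(4v² − 1) for v ≥ 1 and G(v) := (p₁/(p₁ + 2p₂)) · exp(−(p₁ π v² + p₂(2π v² − a(v)))) for v ≥ 1. For n large, let v_n be the positive root of π(p₁ + p₂) v² + 2 p₂ v = log(n p₁ / (τ (p₁ + 2p₂))), i.e. v_n = (−p₂ + √(p₂² + π(p₁+p₂) · log(n p₁/(τ(p₁+2p₂))))) / (π(p₁+p₂)). Then n · G(v_n) = τ + O((log n)^{−1/2}) as n → ∞. -/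

import Mathlib

open Real

private lemma my_arcsin_ge {x : ℝ} (h0 : 0 ≤ x) (h1 : x ≤ 1) : x ≤ Real.arcsin x := by
  have hpi : (1:ℝ) ≤ π/2 := by have := Real.pi_gt_three; linarith
  have hx : Real.arcsin (Real.sin x) = x :=
    Real.arcsin_sin (by linarith) (by linarith)
  calc x = Real.arcsin (Real.sin x) := hx.symm
    _ ≤ Real.arcsin x := Real.monotone_arcsin (Real.sin_le h0)

private lemma my_arcsin_le {x : ℝ} (h0 : 0 ≤ x) (h1 : x ≤ 1/2) :
    Real.arcsin x ≤ x + x^3 := by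
  rcases eq_or_lt_of_le h0 with h | h
  · rw [← h]; simp
  · have hy0 : 0 < x + x^3 := by positivity
    have hu : x^2 ≤ 1/4 := by nlinarith
    have h2x : (0:ℝ) ≤ x^2 := sq_nonneg x
    have hu2 : x^4 ≤ (1/4)*x^2 := by nlinarith
    have hu3 : x^6 ≤ (1/16)*x^2 := by nlinarith
    have hcube : (1+x^2)^3 ≤ 4 := by nlinarith
    have hy1 : x + x^3 ≤ 1 := by nlinarith
    have hsin : (x + x^3) - (x + x^3)^3/4 < Real.sin (x + x^3) :=
      by have h6 := Real.sin_gt_sub_cube hy0; have hp : 0 < (x + x^3)^3 := (by positivity); linarith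
    have hxy : (x + x^3)^3 ≤ 4 * x^3 := by
      calc (x + x^3)^3 = x^3 * (1+x^2)^3 := by ring
        _ ≤ x^3 * 4 := mul_le_mul_of_nonneg_left hcube (by positivity)
        _ = 4 * x^3 := by ring
    have hx_le : x ≤ Real.sin (x + x^3) := by nlinarith
    have hyp : x + x^3 ≤ π/2 := by have := Real.pi_gt_three; nlinarith
    calc Real.arcsin x ≤ Real.arcsin (Real.sin (x + x^3)) := Real.monotone_arcsin hx_le
      _ = x + x^3 := Real.arcsin_sin (by linarith) hyp

/-- The error term `a(v) - πv² + 2v` is `O(1/v)` on `[1, ∞)`. -/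
private lemma err_bound {w : ℝ} (hw : 1 ≤ w) :
    |2 * w ^ 2 * Real.arccos (1 / (2 * w)) - (1 / 2) * Real.sqrt (4 * w ^ 2 - 1)
      - π * w ^ 2 + 2 * w| ≤ 1 / (2 * w) := by
  have hw0 : 0 < w := by linarith
  set x := 1 / (2 * w) with hxdef
  have hx0 : 0 < x := by positivity
  have hx12 : x ≤ 1/2 := by
    rw [hxdef, div_le_div_iff₀ (by positivity) (by norm_num)]; linarith
  have harccos : Real.arccos x = π/2 - Real.arcsin x := Real.arccos_eq_pi_div_two_sub_arcsin x
  have hA1 : x ≤ Real.arcsin x := my_arcsin_ge hx0.le (by linarith)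
  have hA2 : Real.arcsin x ≤ x + x^3 := my_arcsin_le hx0.le hx12
  have hx_eq : 2 * w^2 * x = w := by
    rw [hxdef]; field_simp
  have hx3_eq : 2 * w^2 * x^3 = 1/(4*w) := by
    rw [hxdef]; field_simp; ring
  have hS1 : 2*w - 1/(2*w) ≤ Real.sqrt (4 * w ^ 2 - 1) := by
    rw [Real.le_sqrt (by nlinarith [sq_nonneg w] : (0:ℝ) ≤ 2*w - 1/(2*w))
        (by nlinarith : (0:ℝ) ≤ 4 * w^2 - 1)]
    have h1 : (2*w - 1/(2*w))^2 = 4*w^2 - 2 + 1/(4*w^2) := by field_simp; ring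
    have h2 : 1/(4*w^2) ≤ 1 := by rw [div_le_one (by positivity)]; nlinarith
    linarith
  have hS2 : Real.sqrt (4 * w ^ 2 - 1) ≤ 2*w - 1/(4*w) := by
    have h1 : (4 : ℝ) * w ^ 2 - 1 ≤ (2*w - 1/(4*w))^2 := by
      have h3 : (2*w - 1/(4*w))^2 = 4*w^2 - 1 + 1/(16*w^2) := by field_simp; ring
      have h4 : (0:ℝ) ≤ 1/(16*w^2) := by positivity
      linarith
    calc Real.sqrt (4 * w ^ 2 - 1) ≤ Real.sqrt ((2*w - 1/(4*w))^2) := Real.sqrt_le_sqrt h1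
      _ = 2*w - 1/(4*w) := by
          apply Real.sqrt_sq
          have h5 : 1/(4*w) ≤ 1 := by rw [div_le_one (by positivity)]; linarith
          linarith
  have hT1 : w ≤ 2 * w^2 * Real.arcsin x := by
    calc w = 2 * w^2 * x := hx_eq.symm
      _ ≤ 2 * w^2 * Real.arcsin x := by nlinarith
  have hT2 : 2 * w^2 * Real.arcsin x ≤ w + 1/(4*w) := by
    calc 2 * w^2 * Real.arcsin x ≤ 2 * w^2 * (x + x^3) := by nlinarith
      _ = w + 1/(4*w) := by rw [mul_add, hx_eq, hx3_eq]
  have hwinv : (0:ℝ) < 1/(2*w) := by positivity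
  rw [harccos, abs_le]
  constructor
  · linarith
  · linarith

set_option maxHeartbeats 1000000 in
theorem stmt7 (p₀ p₁ p₂ τ : ℝ) (h0 : 0 ≤ p₀) (h1 : 0 < p₁) (h2 : 0 ≤ p₂)
    (hsum : p₀ + p₁ + p₂ = 1) (hτ : 0 < τ)
    (a G : ℝ → ℝ)
    (ha : ∀ v ≥ (1 : ℝ), a v = 2 * v ^ 2 * Real.arccos (1 / (2 * v)) -
        (1 / 2) * Real.sqrt (4 * v ^ 2 - 1))
    (hG : ∀ v ≥ (1 : ℝ), G v =
        (p₁ / (p₁ + 2 * p₂)) * Real.exp (-(p₁ * π * v ^ 2 + p₂ * (2 * π * v ^ 2 - a v))))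
    (v : ℕ → ℝ)
    (hv : ∀ n : ℕ, v n =
        (-p₂ + Real.sqrt (p₂ ^ 2 + π * (p₁ + p₂) *
            Real.log ((n : ℝ) * p₁ / (τ * (p₁ + 2 * p₂))))) / (π * (p₁ + p₂))) :
    ∃ C > (0 : ℝ), ∃ N : ℕ, ∀ n : ℕ, N ≤ n →
      |(n : ℝ) * G (v n) - τ| ≤ C / Real.sqrt (Real.log n) := by
  have hπ := Real.pi_pos
  set c := π * (p₁ + p₂) with hc
  have hc0 : 0 < c := by positivity
  set K := p₁ / (τ * (p₁ + 2 * p₂)) with hK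
  have hK0 : 0 < K := by positivity
  set D := Real.log K with hD
  have hp2le : p₂ ≤ 1 := by linarith
  set M : ℝ := 2*|D| + 2*c + 4*p₂ + 8*p₂^2/c + 2 with hM
  refine ⟨2 * τ * Real.sqrt (2*c), by positivity, ⌈Real.exp M⌉₊ + 1, fun n hn => ?_⟩
  have hnM : Real.exp M ≤ (n:ℝ) := by
    calc Real.exp M ≤ (⌈Real.exp M⌉₊ : ℝ) := Nat.le_ceil _
      _ ≤ (n:ℝ) := by exact_mod_cast Nat.le_of_succ_le hn
  have hn0 : (0:ℝ) < n := lt_of_lt_of_le (Real.exp_pos M) hnM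
  have hlogn : M ≤ Real.log n := by
    calc M = Real.log (Real.exp M) := (Real.log_exp M).symm
      _ ≤ Real.log n := Real.log_le_log (Real.exp_pos M) hnM
  have hMpos : (0:ℝ) < M := by
    have h' : (0:ℝ) ≤ 2*|D| + 2*c + 4*p₂ + 8*p₂^2/c := by positivity
    rw [hM]; linarith
  have hlogn0 : 0 < Real.log n := lt_of_lt_of_le hMpos hlogn
  set L := Real.log ((n:ℝ) * K) with hL
  have hLsplit : L = Real.log n + D := by
    rw [hL, Real.log_mul (ne_of_gt hn0) (ne_of_gt hK0), hD]
  have habsD : 2*|D| ≤ M := by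
    have h' : (0:ℝ) ≤ 2*c + 4*p₂ + 8*p₂^2/c + 2 := by positivity
    rw [hM]; linarith
  have hLge : Real.log n / 2 ≤ L := by
    have hDge : -|D| ≤ D := neg_abs_le D
    have h' : 2*|D| ≤ Real.log n := le_trans habsD hlogn
    rw [hLsplit]; linarith
  have hL0 : 0 < L := by linarith
  set s := Real.sqrt (p₂ ^ 2 + c * L) with hs
  have harg : (0:ℝ) ≤ p₂^2 + c*L := by positivity
  have hs2 : s^2 = p₂^2 + c*L := Real.sq_sqrt harg
  have hs0 : 0 ≤ s := Real.sqrt_nonneg _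
  have hargeq : (n:ℝ) * p₁ / (τ * (p₁ + 2 * p₂)) = (n:ℝ) * K := by
    rw [hK, mul_div_assoc]
  have hvn : v n = (-p₂ + s) / c := by
    rw [hv n, hargeq]
  set w := v n with hw
  have hLbig : c + 2*p₂ ≤ L := by
    have h' : 2*(c + 2*p₂) ≤ M := by
      have h'' : (0:ℝ) ≤ 2*|D| + 8*p₂^2/c + 2 := by positivity
      rw [hM]; linarith
    nlinarith
  have hsge : c + p₂ ≤ s := by
    rw [hs, Real.le_sqrt (by positivity) harg]
    nlinarith
  have hw1 : 1 ≤ w := by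
    rw [hvn, le_div_iff₀ hc0]
    linarith
  have hw0 : 0 < w := by linarith
  have hquad : c * w^2 + 2*p₂*w = L := by
    rw [hvn]
    field_simp
    nlinarith [hs2]
  have hNK : (0:ℝ) < (n:ℝ) * K := by positivity
  have hexpL : Real.exp L = (n:ℝ) * K := Real.exp_log hNK
  have hfac : (n:ℝ) * (p₁ / (p₁ + 2*p₂)) = τ * Real.exp L := by
    rw [hexpL, hK]; field_simp
  set f := a w - π * w^2 + 2*w with hf
  have hkey : (n:ℝ) * G w = τ * Real.exp (p₂ * f) := by
    rw [hG w hw1, ← mul_assoc, hfac, mul_assoc, ← Real.exp_add]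
    congr 1
    rw [← hquad, hc, hf]; ring
  have hfb : |f| ≤ 1/(2*w) := by
    have h' := err_bound hw1
    rw [hf, ha w hw1]
    exact h'
  have h2f : |p₂ * f| ≤ 1/(2*w) := by
    rw [abs_mul, abs_of_nonneg h2]
    calc p₂ * |f| ≤ 1 * (1/(2*w)) := mul_le_mul hp2le hfb (abs_nonneg f) zero_le_one
      _ = 1/(2*w) := one_mul _
  have hx_small : |p₂ * f| ≤ 1 := by
    refine h2f.trans ?_
    rw [div_le_one (by positivity)]; linarith
  have hexpb : |Real.exp (p₂ * f) - 1| ≤ 2 * |p₂ * f| := Real.abs_exp_sub_one_le hx_small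
  have hbound : |(n:ℝ) * G w - τ| ≤ τ / w := by
    rw [hkey, show τ * Real.exp (p₂*f) - τ = τ * (Real.exp (p₂*f) - 1) by ring,
      abs_mul, abs_of_pos hτ]
    calc τ * |Real.exp (p₂*f) - 1| ≤ τ * (2 * |p₂ * f|) :=
          mul_le_mul_of_nonneg_left hexpb hτ.le
      _ ≤ τ * (2 * (1/(2*w))) := by
          apply mul_le_mul_of_nonneg_left _ hτ.le
          linarith
      _ = τ / w := by field_simp
  -- lower bound on w in terms of √(log n)
  have h8 : 8 * p₂^2 / c ≤ Real.log n := by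
    have h' : 8*p₂^2/c ≤ M := by
      have h'' : (0:ℝ) ≤ 2*|D| + 2*c + 4*p₂ + 2 := by positivity
      rw [hM]; linarith
    exact le_trans h' hlogn
  have hcL4 : 4 * p₂^2 ≤ c * L := by
    have h1' : 8*p₂^2/c*c ≤ Real.log n * c := mul_le_mul_of_nonneg_right h8 hc0.le
    rw [div_mul_cancel₀ _ hc0.ne'] at h1'
    have h2' : Real.log n / 2 * c ≤ L * c := mul_le_mul_of_nonneg_right hLge hc0.le
    nlinarith only [h1', h2']
  have hp2s : 2 * p₂ ≤ s := by
    have h4 : (2*p₂)^2 ≤ s^2 := by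
      rw [hs2]; nlinarith only [hcL4, sq_nonneg p₂]
    calc 2*p₂ = Real.sqrt ((2*p₂)^2) := (Real.sqrt_sq (by positivity)).symm
      _ ≤ Real.sqrt (s^2) := Real.sqrt_le_sqrt h4
      _ = s := Real.sqrt_sq hs0
  have hws : s / (2*c) ≤ w := by
    rw [hvn, div_le_div_iff₀ (by positivity) hc0]
    nlinarith only [mul_le_mul_of_nonneg_left hp2s hc0.le]
  have h8cw : Real.log n ≤ 8*c*w^2 := by
    have hw2 : (s/(2*c))^2 ≤ w^2 := pow_le_pow_left₀ (by positivity) hws 2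
    have hs2ge : c * Real.log n / 2 ≤ s^2 := by
      rw [hs2]
      have h3' := mul_le_mul_of_nonneg_left hLge hc0.le
      nlinarith only [h3', sq_nonneg p₂]
    have hid : (s/(2*c))^2 = s^2/(4*c^2) := by
      rw [div_pow]; congr 1; ring
    rw [hid, div_le_iff₀ (by positivity : (0:ℝ) < 4*c^2)] at hw2
    have h10 : c * Real.log n ≤ c * (8*c*w^2) := by nlinarith only [hw2, hs2ge]
    exact le_of_mul_le_mul_left h10 hc0
  have hsl0 : 0 < Real.sqrt (Real.log n) := Real.sqrt_pos.mpr hlogn0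
  have hsq : Real.sqrt (Real.log n) ≤ 2*Real.sqrt (2*c)*w := by
    have h1' : Real.sqrt (Real.log n) ≤ Real.sqrt ((2*Real.sqrt (2*c)*w)^2) := by
      apply Real.sqrt_le_sqrt
      have h2' : (2*Real.sqrt (2*c)*w)^2 = 4*(2*c)*w^2 := by
        rw [mul_pow, mul_pow, Real.sq_sqrt (by positivity : (0:ℝ) ≤ 2*c)]; ring
      rw [h2']; linarith only [h8cw]
    rwa [Real.sqrt_sq (by positivity)] at h1'
  refine hbound.trans ?_
  rw [div_le_div_iff₀ hw0 hsl0]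
  nlinarith only [mul_le_mul_of_nonneg_left hsq hτ.le]
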